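/- Let n ≥ 2, let i_1 < … < i_r (with r ≥ 1) be indices in {1, …, n}, and let D = ℂⁿ \ (⋃_{k=1}^{r} {z : z_{i_k} = 0}) be the complement in ℂⁿ of the corresponding union of coordinate hyperplanes. Then the group Aut(D) of bijective holomorphic self-maps of D with holomorphic inverse, equipped with the compact-open topology, is disconnected. -/

import Mathlib

open Complex Set Real

namespace WindAux

/-- Clamped extension of a map on the unit interval to all of `ℝ`. -/
noncomputable def extMap (h : C(unitInterval, ℂ)) : ℝ → ℂ :=
  fun t => h (Set.projIcc 0 1 zero_le_one t)

lemma extMap_continuous (h : C(unitInterval, ℂ)) : Continuous (extMap h) :=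
  h.continuous.comp continuous_projIcc

lemma extMap_uniformContinuous (h : C(unitInterval, ℂ)) : UniformContinuous (extMap h) :=
  (CompactSpace.uniformContinuous_of_continuous h.continuous).comp
    (LipschitzWith.projIcc zero_le_one).uniformContinuous

lemma prod_div_telescope (G : ℕ → ℂ) (hG : ∀ j, G j ≠ 0) (N : ℕ) :
    ∏ j ∈ Finset.range N, (G (j + 1) / G j) = G N / G 0 := by
  induction N with
  | zero => simp [div_self (hG 0)]
  | succ n ih =>
    rw [Finset.prod_range_succ, ih]
    rw [div_mul_div_comm, mul_comm (G 0) (G n), ← div_div, mul_comm (G n),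
      mul_div_assoc, div_self (hG n), mul_one]

lemma quot_slit {a b : ℂ} (ha : a ≠ 0) (hab : ‖b - a‖ < ‖a‖) :
    b / a ∈ Complex.slitPlane ∧ b ≠ 0 := by
  have hb : b ≠ 0 := by
    intro h
    rw [h, zero_sub, norm_neg] at hab
    exact absurd hab (lt_irrefl _)
  refine ⟨Complex.ball_one_subset_slitPlane ?_, hb⟩
  rw [Metric.mem_ball, dist_eq_norm]
  have : b / a - 1 = (b - a) / a := by field_simp
  rw [this, norm_div]
  rw [div_lt_one (norm_pos_iff.mpr ha)]
  exact hab


lemma extMap_ne_zero {h : C(unitInterval, ℂ)} (hnz : ∀ t, h t ≠ 0) (t : ℝ) :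
    extMap h t ≠ 0 := hnz _

/-- Existence of a continuous logarithm (lift along `exp`) for a nonvanishing
continuous map, via subdivision. -/
lemma exists_lift (h : C(unitInterval, ℂ)) (hnz : ∀ t, h t ≠ 0) :
    ∃ θ : ℝ → ℂ, Continuous θ ∧ ∀ t : ℝ, Complex.exp (θ t) = extMap h t := by
  set g : ℝ → ℂ := extMap h with hg
  have hgc : Continuous g := extMap_continuous h
  have hgnz : ∀ t, g t ≠ 0 := extMap_ne_zero hnz
  -- minimum modulus
  obtain ⟨a, -, ha⟩ := isCompact_univ.exists_isMinOn (univ_nonempty)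
    ((continuous_norm.comp h.continuous).continuousOn :
      ContinuousOn (fun s : unitInterval => ‖h s‖) univ)
  have hmpos : 0 < ‖h a‖ := norm_pos_iff.mpr (hnz a)
  have hmle : ∀ t : ℝ, ‖h a‖ ≤ ‖g t‖ := fun t => ha (mem_univ _)
  -- uniform continuity
  obtain ⟨δ, hδpos, hδ⟩ := Metric.uniformContinuous_iff.mp
    (extMap_uniformContinuous h) ‖h a‖ hmpos
  obtain ⟨N, hN⟩ := exists_nat_one_div_lt hδpos
  set K : ℕ := N + 1 with hK
  have hKpos : (0:ℝ) < K := by positivity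
  set P : ℕ → ℝ → ℝ := fun j t => min t ((j : ℝ) / K) with hP
  have hmono : ∀ j : ℕ, ((j:ℝ)) / K ≤ (((j+1:ℕ)):ℝ) / K := by
    intro j
    apply (div_le_div_iff_of_pos_right hKpos).mpr
    exact_mod_cast Nat.le_succ j
  have hPle : ∀ (t : ℝ) (j : ℕ), P j t ≤ P (j+1) t := fun t j =>
    min_le_min le_rfl (hmono j)
  have hPdiff : ∀ (t : ℝ) (j : ℕ), P (j+1) t - P j t ≤ 1 / K := by
    intro t j
    have hj : (((j+1:ℕ)):ℝ)/K - (j:ℝ)/K = 1/K := by push_cast; ring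
    rcases le_total t ((j:ℝ)/K) with hc | hc
    · have h1 : P j t = t := min_eq_left hc
      have h2 : P (j+1) t = t := min_eq_left (hc.trans (hmono j))
      rw [h1, h2, sub_self]
      positivity
    · have h1 : P j t = (j:ℝ)/K := min_eq_right hc
      have h2 : P (j+1) t ≤ (((j+1:ℕ)):ℝ)/K := min_le_right _ _
      rw [h1]
      linarith
  -- the subdivision quotients stay in the ball of radius 1 around 1
  have hquot : ∀ (t : ℝ) (j : ℕ),
      ‖g (P (j+1) t) - g (P j t)‖ < ‖g (P j t)‖ := by
    intro t j
    have hd : dist (P (j+1) t) (P j t) < δ := by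
      rw [Real.dist_eq, _root_.abs_of_nonneg (sub_nonneg.mpr (hPle t j))]
      calc P (j+1) t - P j t ≤ 1 / K := hPdiff t j
        _ < δ := by rw [hK]; push_cast; exact hN
    calc ‖g (P (j+1) t) - g (P j t)‖ = dist (g (P (j+1) t)) (g (P j t)) :=
          (dist_eq_norm _ _).symm
      _ < ‖h a‖ := hδ hd
      _ ≤ ‖g (P j t)‖ := hmle _
  set θ : ℝ → ℂ := fun t =>
    Complex.log (g 0) + ∑ j ∈ Finset.range K, Complex.log (g (P (j+1) t) / g (P j t)) with hθ
  have hθc : Continuous θ := by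
    apply Continuous.add continuous_const
    apply continuous_finset_sum
    intro j _
    have hinner : Continuous fun t => g (P (j+1) t) / g (P j t) :=
      (hgc.comp (continuous_id.min continuous_const)).div
        (hgc.comp (continuous_id.min continuous_const)) (fun t => hgnz _)
    rw [continuous_iff_continuousAt]
    intro t
    exact ContinuousAt.comp (g := Complex.log)
      (_root_.continuousAt_clog (quot_slit (hgnz _) (hquot t j)).1) hinner.continuousAt
  refine ⟨θ, hθc, fun t => ?_⟩
  have hPK : P K t = min t 1 := by rw [hP]; simp [div_self hKpos.ne']
  have hP0 : P 0 t = min t 0 := by rw [hP]; simp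
  have hexp : Complex.exp (θ t) = g 0 * (g (min t 1) / g (min t 0)) := by
    rw [hθ]
    rw [Complex.exp_add, Complex.exp_sum, Complex.exp_log (hgnz 0)]
    have : ∀ j ∈ Finset.range K,
        Complex.exp (Complex.log (g (P (j+1) t) / g (P j t))) = g (P (j+1) t) / g (P j t) :=
      fun j _ => Complex.exp_log (div_ne_zero (hgnz _) (hgnz _))
    rw [Finset.prod_congr rfl this,
      prod_div_telescope (fun j => g (P j t)) (fun j => hgnz _) K, hPK, hP0]
  rw [hexp]
  have hhi : g (min t 1) = g t := by
    rcases le_total t 1 with ht | ht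
    · rw [min_eq_left ht]
    · rw [min_eq_right ht, hg]
      unfold extMap
      rw [Set.projIcc_right, Set.projIcc_of_right_le _ ht]
  rcases le_total 0 t with ht | ht
  · rw [min_eq_right ht, hhi, mul_comm, div_mul_cancel₀ _ (hgnz 0)]
  · have h0 : g t = g 0 := by
      rw [hg]; unfold extMap
      rw [Set.projIcc_of_le_left _ ht, Set.projIcc_left]
    rw [min_eq_left (ht.trans zero_le_one), min_eq_left ht, div_self (hgnz t), mul_one, h0]

/-- Two continuous logarithms of the same function have the same imaginary
increment over `[0,1]`. -/
lemma lift_imdiff_eq {g θ θ' : ℝ → ℂ} (hθ : Continuous θ) (hθ' : Continuous θ')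
    (hl : ∀ t, Complex.exp (θ t) = g t) (hl' : ∀ t, Complex.exp (θ' t) = g t) :
    (θ 1 - θ 0).im = (θ' 1 - θ' 0).im := by
  have key : ∀ t : ℝ, ∃ m : ℤ, (θ t - θ' t).im = m * (2 * π) := by
    intro t
    have hone : Complex.exp (θ t - θ' t) = 1 := by
      rw [Complex.exp_sub, hl, hl', div_self]
      rw [← hl' t]
      exact Complex.exp_ne_zero _
    obtain ⟨m, hm⟩ := Complex.exp_eq_one_iff.mp hone
    refine ⟨m, ?_⟩
    rw [hm]
    simp [Complex.mul_im]
  have main : ∀ v : ℝ → ℝ, Continuous v → (∀ t, ∃ m : ℤ, v t = m * (2 * π)) →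
      ¬ (v 0 < v 1) := by
    intro v hv hint hlt
    obtain ⟨m0, hm0⟩ := hint 0
    obtain ⟨m1, hm1⟩ := hint 1
    have h2π : (0:ℝ) < 2 * π := by positivity
    have hm01 : m0 < m1 := by
      have h' := hlt
      rw [hm0, hm1] at h'
      exact_mod_cast (mul_lt_mul_iff_of_pos_right h2π).mp h'
    have hy : v 0 + π ∈ Icc (v 0) (v 1) := by
      constructor
      · linarith [Real.pi_pos]
      · rw [hm0, hm1]
        have : (m0:ℝ) + 1 ≤ (m1:ℝ) := by exact_mod_cast hm01
        nlinarith [Real.pi_pos]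
    obtain ⟨x, -, hx⟩ := intermediate_value_Icc zero_le_one hv.continuousOn hy
    obtain ⟨m, hm⟩ := hint x
    rw [hm, hm0] at hx
    have hz : ((2*m - 2*m0 - 1 : ℤ):ℝ) * π = 0 := by push_cast; linarith
    have hz2 : (2*m - 2*m0 - 1 : ℤ) = 0 := by
      have := (mul_eq_zero.mp hz).resolve_right Real.pi_ne_zero
      exact_mod_cast this
    omega
  set u : ℝ → ℝ := fun t => (θ t - θ' t).im with hu
  have huc : Continuous u := Complex.continuous_im.comp (hθ.sub hθ')
  have hu01 : u 0 = u 1 := by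
    by_contra hne
    rcases lt_or_gt_of_ne hne with hlt | hlt
    · exact main u huc key hlt
    · exact main (fun t => u (1 - t)) (huc.comp (continuous_const.sub continuous_id))
        (fun t => key (1 - t)) (by simpa using hlt)
  have h0 : (θ 0 - θ' 0).im = (θ 1 - θ' 1).im := hu01
  simp only [Complex.sub_im] at h0 ⊢
  linarith

/-- Nearby closed loops admit lifts with the same imaginary increment. -/
lemma lift_of_close (h₀ h : C(unitInterval, ℂ)) (θ₀ : ℝ → ℂ) (hθ₀ : Continuous θ₀)
    (hl₀ : ∀ t, Complex.exp (θ₀ t) = extMap h₀ t)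
    (hcl : extMap h (1:ℝ) = extMap h 0) (hcl₀ : extMap h₀ (1:ℝ) = extMap h₀ 0)
    (hclose : ∀ t : ℝ, ‖extMap h t - extMap h₀ t‖ < ‖extMap h₀ t‖) :
    ∃ θ : ℝ → ℂ, Continuous θ ∧ (∀ t, Complex.exp (θ t) = extMap h t) ∧
      (θ 1 - θ 0).im = (θ₀ 1 - θ₀ 0).im := by
  have h₀nz : ∀ t : ℝ, extMap h₀ t ≠ 0 := by
    intro t
    rw [← hl₀ t]
    exact Complex.exp_ne_zero _
  set q : ℝ → ℂ := fun t => extMap h t / extMap h₀ t with hq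
  have hqslit : ∀ t, q t ∈ Complex.slitPlane := fun t =>
    (quot_slit (h₀nz t) (hclose t)).1
  have hqnz : ∀ t, q t ≠ 0 := fun t =>
    div_ne_zero (quot_slit (h₀nz t) (hclose t)).2 (h₀nz t)
  set θ : ℝ → ℂ := fun t => θ₀ t + Complex.log (q t) with hθ
  have hqc : Continuous q := (extMap_continuous h).div (extMap_continuous h₀) h₀nz
  have hθc : Continuous θ := by
    apply hθ₀.add
    rw [continuous_iff_continuousAt]
    intro t
    exact ContinuousAt.comp (g := Complex.log)
      (_root_.continuousAt_clog (hqslit t)) hqc.continuousAt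
  refine ⟨θ, hθc, fun t => ?_, ?_⟩
  · rw [hθ]
    simp only
    rw [Complex.exp_add, hl₀, Complex.exp_log (hqnz t), hq]
    simp only
    rw [mul_div_cancel₀]
    exact h₀nz t
  · have hq01 : q 1 = q 0 := by rw [hq]; simp only; rw [hcl, hcl₀]
    rw [hθ]
    simp only [hq01, Complex.add_im, Complex.sub_im]
    ring

/-- Sets defined by a condition on the imaginary increment of a lift are open. -/
lemma windSet_isOpen {α : Type*} [TopologicalSpace α] (Φ : α → C(unitInterval, ℂ))
    (hΦ : Continuous Φ) (hnz : ∀ (F : α) (t : unitInterval), Φ F t ≠ 0)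
    (hcl : ∀ F : α, extMap (Φ F) (1:ℝ) = extMap (Φ F) 0) (P : Set ℝ) :
    IsOpen {F : α | ∃ θ : ℝ → ℂ, Continuous θ ∧
      (∀ t : ℝ, Complex.exp (θ t) = extMap (Φ F) t) ∧ (θ 1 - θ 0).im ∈ P} := by
  rw [isOpen_iff_forall_mem_open]
  rintro F₀ ⟨θ₀, hθ₀c, hθ₀l, hθ₀P⟩
  obtain ⟨a, -, ha⟩ := isCompact_univ.exists_isMinOn univ_nonempty
    ((continuous_norm.comp (Φ F₀).continuous).continuousOn :
      ContinuousOn (fun s : unitInterval => ‖Φ F₀ s‖) univ)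
  have hmpos : 0 < ‖Φ F₀ a‖ := norm_pos_iff.mpr (hnz F₀ a)
  refine ⟨Φ ⁻¹' Metric.ball (Φ F₀) ‖Φ F₀ a‖, ?_, hΦ.isOpen_preimage _ Metric.isOpen_ball, ?_⟩
  · intro F hF
    have hd : dist (Φ F) (Φ F₀) < ‖Φ F₀ a‖ := Metric.mem_ball.mp hF
    have hclose : ∀ t : ℝ, ‖extMap (Φ F) t - extMap (Φ F₀) t‖ < ‖extMap (Φ F₀) t‖ := by
      intro t
      calc ‖extMap (Φ F) t - extMap (Φ F₀) t‖
          = dist (Φ F (projIcc 0 1 zero_le_one t)) (Φ F₀ (projIcc 0 1 zero_le_one t)) := by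
            rw [dist_eq_norm]; rfl
        _ ≤ dist (Φ F) (Φ F₀) := ContinuousMap.dist_apply_le_dist _
        _ < ‖Φ F₀ a‖ := hd
        _ ≤ ‖extMap (Φ F₀) t‖ := ha (mem_univ _)
    obtain ⟨θ, h1, h2, h3⟩ := lift_of_close (Φ F₀) (Φ F) θ₀ hθ₀c hθ₀l (hcl F) (hcl F₀) hclose
    exact ⟨θ, h1, h2, h3 ▸ hθ₀P⟩
  · rw [Set.mem_preimage, Metric.mem_ball, dist_self]
    exact hmpos

end WindAux

/-- The complement in `ℂⁿ` of the union of the coordinate hyperplanes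
`{z : z_{i k} = 0}`, `k = 1, …, r`. -/
def HyperplaneComplement (n r : ℕ) (i : Fin r → Fin n) : Set (Fin n → ℂ) :=
  {z : Fin n → ℂ | ∀ k : Fin r, z (i k) ≠ 0}

/-- `Aut(D)` for `D ⊆ ℂⁿ`: the set of continuous self-maps of `D` that are
holomorphic (i.e. restrictions to `D` of maps holomorphic on `D`) and admit a
holomorphic inverse, topologized by the compact-open topology. -/
def AutOf {n : ℕ} (D : Set (Fin n → ℂ)) : Set C(D, D) :=
  {F : C(D, D) |
    (∃ F' : (Fin n → ℂ) → (Fin n → ℂ), DifferentiableOn ℂ F' D ∧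
        ∀ z : D, (F z : Fin n → ℂ) = F' (z : Fin n → ℂ)) ∧
    ∃ G : C(D, D),
      (∃ G' : (Fin n → ℂ) → (Fin n → ℂ), DifferentiableOn ℂ G' D ∧
          ∀ z : D, (G z : Fin n → ℂ) = G' (z : Fin n → ℂ)) ∧
      (∀ z : D, G (F z) = z) ∧ (∀ z : D, F (G z) = z)}

namespace HypAux

open WindAux

variable (n r : ℕ) (i : Fin r → Fin n) (hr : 1 ≤ r)

/-- The distinguished removed coordinate. -/
def s0 : Fin n := i ⟨0, hr⟩

lemma memD (c : ℂ) (hc : c ≠ 0) :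
    (fun s => if s = s0 n r i hr then c else 1) ∈ HyperplaneComplement n r i := by
  intro k
  show (if i k = s0 n r i hr then c else 1) ≠ 0
  split_ifs with h
  · exact hc
  · exact one_ne_zero

/-- The basic loop around the hyperplane `z_{s0} = 0`. -/
noncomputable def loopCM : C(unitInterval, ↥(HyperplaneComplement n r i)) where
  toFun t := ⟨fun s => if s = s0 n r i hr then Complex.exp (2 * (π:ℂ) * Complex.I * ((t:ℝ):ℂ))
      else 1, memD n r i hr _ (Complex.exp_ne_zero _)⟩
  continuous_toFun := by
    refine Continuous.subtype_mk (continuous_pi fun s => ?_) _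
    by_cases hs : s = s0 n r i hr
    · simp only [hs, if_pos rfl]
      exact Complex.continuous_exp.comp (by continuity)
    · simp only [if_neg hs]
      exact continuous_const

/-- Evaluation of the distinguished coordinate. -/
noncomputable def coordCM : C(↥(HyperplaneComplement n r i), ℂ) :=
  ⟨fun z => (z : Fin n → ℂ) (s0 n r i hr), (continuous_apply _).comp continuous_subtype_val⟩

/-- The map sending `F` to the restriction of its distinguished coordinate to the loop. -/
noncomputable def ΦM (F : C(↥(HyperplaneComplement n r i), ↥(HyperplaneComplement n r i))) :
    C(unitInterval, ℂ) :=
  ((coordCM n r i hr).comp F).comp (loopCM n r i hr)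

lemma ΦM_continuous : Continuous (ΦM n r i hr) :=
  (ContinuousMap.continuous_precomp (loopCM n r i hr)).comp
    (ContinuousMap.continuous_postcomp (coordCM n r i hr))

lemma ΦM_ne_zero (F : C(↥(HyperplaneComplement n r i), ↥(HyperplaneComplement n r i)))
    (t : unitInterval) : ΦM n r i hr F t ≠ 0 :=
  (F ((loopCM n r i hr) t)).2 ⟨0, hr⟩

lemma loopCM_closed :
    (loopCM n r i hr) (Set.projIcc 0 1 zero_le_one (1:ℝ)) =
      (loopCM n r i hr) (Set.projIcc 0 1 zero_le_one 0) := by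
  rw [Set.projIcc_right, Set.projIcc_left]
  apply Subtype.ext
  funext s
  show (if s = s0 n r i hr then Complex.exp (2 * (π:ℂ) * Complex.I * ((1:ℝ):ℂ)) else 1) =
    (if s = s0 n r i hr then Complex.exp (2 * (π:ℂ) * Complex.I * ((0:ℝ):ℂ)) else 1)
  split_ifs with h
  · push_cast
    rw [mul_one, mul_zero, Complex.exp_zero]
    exact_mod_cast Complex.exp_two_pi_mul_I
  · rfl

lemma ΦM_closed (F : C(↥(HyperplaneComplement n r i), ↥(HyperplaneComplement n r i))) :
    extMap (ΦM n r i hr F) (1:ℝ) = extMap (ΦM n r i hr F) 0 := by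
  show (ΦM n r i hr F) (Set.projIcc 0 1 zero_le_one (1:ℝ)) =
    (ΦM n r i hr F) (Set.projIcc 0 1 zero_le_one 0)
  simp only [ΦM, ContinuousMap.comp_apply]
  rw [loopCM_closed]

end HypAux


namespace HypAux

open WindAux

variable (n r : ℕ) (i : Fin r → Fin n) (hr : 1 ≤ r)

lemma id_mem_Aut : ContinuousMap.id ↥(HyperplaneComplement n r i) ∈
    AutOf (HyperplaneComplement n r i) :=
  ⟨⟨id, differentiableOn_id, fun _ => rfl⟩, ContinuousMap.id _,
    ⟨id, differentiableOn_id, fun _ => rfl⟩, fun _ => rfl, fun _ => rfl⟩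

lemma id_wind : ∃ θ : ℝ → ℂ, Continuous θ ∧
    (∀ t : ℝ, Complex.exp (θ t) =
      extMap (ΦM n r i hr (ContinuousMap.id ↥(HyperplaneComplement n r i))) t) ∧
    (θ 1 - θ 0).im = 2 * π := by
  refine ⟨fun t => 2 * (π:ℂ) * Complex.I * ((Set.projIcc 0 1 zero_le_one t : ℝ):ℂ),
    ?_, ?_, ?_⟩
  · exact continuous_const.mul
      (Complex.continuous_ofReal.comp (continuous_subtype_val.comp continuous_projIcc))
  · intro t
    show Complex.exp (2 * (π:ℂ) * Complex.I * ((Set.projIcc 0 1 zero_le_one t : ℝ):ℂ)) =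
      (if s0 n r i hr = s0 n r i hr then
        Complex.exp (2 * (π:ℂ) * Complex.I * ((Set.projIcc 0 1 zero_le_one t : ℝ):ℂ)) else 1)
    rw [if_pos rfl]
  · simp only [Set.projIcc_right, Set.projIcc_left]
    show (2 * (π:ℂ) * Complex.I * ((1:ℝ):ℂ) - 2 * (π:ℂ) * Complex.I * ((0:ℝ):ℂ)).im = 2 * π
    push_cast
    rw [mul_one, mul_zero, sub_zero]
    simp [Complex.mul_im]

/-- Inversion of the distinguished coordinate. -/
noncomputable def σf : (Fin n → ℂ) → Fin n → ℂ :=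
  fun z => Function.update z (s0 n r i hr) ((z (s0 n r i hr))⁻¹)

lemma σf_memD (z : Fin n → ℂ) (hz : z ∈ HyperplaneComplement n r i) :
    σf n r i hr z ∈ HyperplaneComplement n r i := by
  intro k
  show Function.update z _ _ (i k) ≠ 0
  rw [Function.update_apply]
  split_ifs with hk
  · exact inv_ne_zero (hz ⟨0, hr⟩)
  · exact hz k

/-- The coordinate inversion as a continuous self-map of `D`. -/
noncomputable def σCM : C(↥(HyperplaneComplement n r i), ↥(HyperplaneComplement n r i)) where
  toFun z := ⟨σf n r i hr z, σf_memD n r i hr z z.2⟩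
  continuous_toFun := by
    refine Continuous.subtype_mk (continuous_pi fun s => ?_) _
    simp only [σf, Function.update_apply]
    split_ifs with hs
    · exact ((continuous_apply _).comp continuous_subtype_val).inv₀
        (fun z => z.2 ⟨0, hr⟩)
    · exact (continuous_apply s).comp continuous_subtype_val

lemma σf_invol (w : Fin n → ℂ) : σf n r i hr (σf n r i hr w) = w := by
  funext s
  by_cases hs : s = s0 n r i hr
  · subst hs
    simp [σf]
  · simp [σf, Function.update_apply, hs]

lemma σf_diff : DifferentiableOn ℂ (σf n r i hr) (HyperplaneComplement n r i) := by
  intro z hz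
  apply differentiableWithinAt_pi.2
  intro s
  simp only [σf, Function.update_apply]
  split_ifs with hs
  · exact ((differentiable_apply (𝕜 := ℂ) (s0 n r i hr)).differentiableAt.differentiableWithinAt).inv
      (hz ⟨0, hr⟩)
  · exact (differentiable_apply (𝕜 := ℂ) s).differentiableAt.differentiableWithinAt

lemma σ_mem_Aut : σCM n r i hr ∈ AutOf (HyperplaneComplement n r i) := by
  refine ⟨⟨σf n r i hr, σf_diff n r i hr, fun _ => rfl⟩, σCM n r i hr,
    ⟨σf n r i hr, σf_diff n r i hr, fun _ => rfl⟩, ?_, ?_⟩ <;>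
  · intro z
    exact Subtype.ext (σf_invol n r i hr (z : Fin n → ℂ))

lemma σ_wind : ∃ θ : ℝ → ℂ, Continuous θ ∧
    (∀ t : ℝ, Complex.exp (θ t) = extMap (ΦM n r i hr (σCM n r i hr)) t) ∧
    (θ 1 - θ 0).im = -(2 * π) := by
  refine ⟨fun t => -(2 * (π:ℂ) * Complex.I * ((Set.projIcc 0 1 zero_le_one t : ℝ):ℂ)),
    ?_, ?_, ?_⟩
  · exact (continuous_const.mul
      (Complex.continuous_ofReal.comp (continuous_subtype_val.comp continuous_projIcc))).neg
  · intro t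
    show Complex.exp (-(2 * (π:ℂ) * Complex.I * ((Set.projIcc 0 1 zero_le_one t : ℝ):ℂ))) =
      Function.update
        (fun s => if s = s0 n r i hr then
          Complex.exp (2 * (π:ℂ) * Complex.I * ((Set.projIcc 0 1 zero_le_one t : ℝ):ℂ)) else 1)
        (s0 n r i hr)
        (((fun s => if s = s0 n r i hr then
          Complex.exp (2 * (π:ℂ) * Complex.I * ((Set.projIcc 0 1 zero_le_one t : ℝ):ℂ)) else 1)
          (s0 n r i hr))⁻¹) (s0 n r i hr)
    rw [Function.update_self]
    simp only [if_pos rfl]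
    exact Complex.exp_neg _
  · simp only [Set.projIcc_right, Set.projIcc_left]
    show (-(2 * (π:ℂ) * Complex.I * ((1:ℝ):ℂ)) - -(2 * (π:ℂ) * Complex.I * ((0:ℝ):ℂ))).im =
      -(2 * π)
    push_cast
    rw [mul_one, mul_zero, neg_zero, sub_zero]
    simp [Complex.mul_im]

end HypAux


/-- For `n ≥ 2` and `D = ℂⁿ` minus a nonempty union of coordinate
hyperplanes (indices `i₁ < … < i_r`, `r ≥ 1`), the group `Aut(D)` with the
compact-open topology is disconnected. -/
theorem aut_hyperplane_complement_disconnected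
    (n r : ℕ) (hn : 2 ≤ n) (hr : 1 ≤ r)
    (i : Fin r → Fin n) (hi : StrictMono i) :
    ¬ IsPreconnected (AutOf (HyperplaneComplement n r i)) := by
  intro hpc
  set Φ := HypAux.ΦM n r i hr with hΦ
  set U : Set C(↥(HyperplaneComplement n r i), ↥(HyperplaneComplement n r i)) :=
    {F | ∃ θ : ℝ → ℂ, Continuous θ ∧
      (∀ t : ℝ, Complex.exp (θ t) = WindAux.extMap (Φ F) t) ∧
      (θ 1 - θ 0).im ∈ Set.Ioi π} with hU
  set V : Set C(↥(HyperplaneComplement n r i), ↥(HyperplaneComplement n r i)) :=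
    {F | ∃ θ : ℝ → ℂ, Continuous θ ∧
      (∀ t : ℝ, Complex.exp (θ t) = WindAux.extMap (Φ F) t) ∧
      (θ 1 - θ 0).im ∈ Set.Iio π} with hV
  have hUopen : IsOpen U := WindAux.windSet_isOpen Φ (HypAux.ΦM_continuous n r i hr)
    (HypAux.ΦM_ne_zero n r i hr) (HypAux.ΦM_closed n r i hr) (Set.Ioi π)
  have hVopen : IsOpen V := WindAux.windSet_isOpen Φ (HypAux.ΦM_continuous n r i hr)
    (HypAux.ΦM_ne_zero n r i hr) (HypAux.ΦM_closed n r i hr) (Set.Iio π)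
  have hcover : ∀ F, F ∈ U ∪ V := by
    intro F
    obtain ⟨θ, hc, hl⟩ := WindAux.exists_lift (Φ F) (HypAux.ΦM_ne_zero n r i hr F)
    have hone : Complex.exp (θ 1 - θ 0) = 1 := by
      rw [Complex.exp_sub, hl 1, hl 0, HypAux.ΦM_closed n r i hr F, div_self]
      exact WindAux.extMap_ne_zero (HypAux.ΦM_ne_zero n r i hr F) 0
    obtain ⟨m, hm⟩ := Complex.exp_eq_one_iff.mp hone
    have him : (θ 1 - θ 0).im = m * (2 * π) := by
      rw [hm]
      simp [Complex.mul_im]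
    rcases le_or_gt m 0 with hm0 | hm0
    · right
      refine ⟨θ, hc, hl, ?_⟩
      rw [Set.mem_Iio, him]
      have hc' : (m:ℝ) ≤ 0 := by exact_mod_cast hm0
      nlinarith [Real.pi_pos]
    · left
      refine ⟨θ, hc, hl, ?_⟩
      rw [Set.mem_Ioi, him]
      have hc' : (1:ℝ) ≤ (m:ℝ) := by exact_mod_cast hm0
      nlinarith [Real.pi_pos]
  have hidU : ContinuousMap.id ↥(HyperplaneComplement n r i) ∈ U := by
    obtain ⟨θ, hc, hl, hv⟩ := HypAux.id_wind n r i hr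
    exact ⟨θ, hc, hl, by rw [Set.mem_Ioi, hv]; linarith [Real.pi_pos]⟩
  have hσV : HypAux.σCM n r i hr ∈ V := by
    obtain ⟨θ, hc, hl, hv⟩ := HypAux.σ_wind n r i hr
    exact ⟨θ, hc, hl, by rw [Set.mem_Iio, hv]; linarith [Real.pi_pos]⟩
  obtain ⟨F, -, hFU, hFV⟩ := hpc U V hUopen hVopen (fun F _ => hcover F)
    ⟨_, HypAux.id_mem_Aut n r i, hidU⟩ ⟨_, HypAux.σ_mem_Aut n r i hr, hσV⟩
  obtain ⟨θ, hθc, hθl, hθP⟩ := hFU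
  obtain ⟨θ', hθ'c, hθ'l, hθ'P⟩ := hFV
  have heq := WindAux.lift_imdiff_eq hθc hθ'c hθl hθ'l
  rw [Set.mem_Ioi] at hθP
  rw [Set.mem_Iio] at hθ'P
  linarith
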